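/- Let I, f, C, M, μ be as above (f₁(x)=x, C = sup|f'|_∞ < ∞). For any p ∈ ℤⁿ, q ∈ ℤ, ε > 0, θ ∈ ℝⁿ with |q| > 2/ε and B^θ_{p,q}(ε) ∩ M ≠ ∅, one has μ(B^θ_{p,q}(ε) ∩ M) ≤ (4nC/min{C^{-1},|I|})·|q|^{-ε/2}·μ(B^θ_{p,q}(ε/2) ∩ M), where B^θ_{p,q}(ε) := {y ∈ ℝⁿ : |qy + p + θ|_∞ < |q|^{-1/n-ε}}. -/

import Mathlib

open Real MeasureTheory Filter Set

/-- The inhomogeneous ball `B^θ_{p,q}(ε) = {y : |q y + p + θ|_∞ < |q|^{-1/n-ε}}`. -/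
def inhomBall (n : ℕ) (p : Fin n → ℤ) (q : ℤ) (θ : Fin n → ℝ) (ε : ℝ) :
    Set (Fin n → ℝ) :=
  {y | ∀ i, |(q : ℝ) * y i + (p i : ℝ) + θ i| < |(q : ℝ)| ^ (-(1 / (n : ℝ)) - ε)}

/-- The induced measure `μ(S ∩ M)` of a piece of the curve `M = f(I)`:
`∫_J |f'(x)|₂ dx` where `J = {x ∈ I : f(x) ∈ S}`. -/
noncomputable def curveMass (n : ℕ) (I : Set ℝ) (f f' : ℝ → Fin n → ℝ)
    (S : Set (Fin n → ℝ)) : ℝ :=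
  ∫ x in {x ∈ I | f x ∈ S}, Real.sqrt (∑ i, (f' x i) ^ 2)

set_option maxHeartbeats 1000000 in
/-- If `|q| > 2/ε` and `B^θ_{p,q}(ε)` meets the curve `M = f(I)`, then
`μ(B^θ_{p,q}(ε) ∩ M) ≤ (4nC / min{C⁻¹,|I|}) |q|^{-ε/2} μ(B^θ_{p,q}(ε/2) ∩ M)`. -/
theorem curveMass_inhomBall_compare
    (n : ℕ) (hn : 0 < n) (a b : ℝ) (hab : a < b)
    (f f' : ℝ → Fin n → ℝ)
    (hderiv : ∀ x ∈ Icc a b, HasDerivAt f (f' x) x)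
    (hf1 : ∀ x ∈ Icc a b, f x ⟨0, hn⟩ = x)
    (C : ℝ) (hC : ∀ x ∈ Icc a b, (⨆ i, |f' x i|) ≤ C)
    (p : Fin n → ℤ) (q : ℤ) (θ : Fin n → ℝ) (ε : ℝ) (hε : 0 < ε)
    (hq : 2 / ε < |(q : ℝ)|)
    (hhit : ∃ x ∈ Icc a b, f x ∈ inhomBall n p q θ ε) :
    curveMass n (Icc a b) f f' (inhomBall n p q θ ε)
      ≤ (4 * n * C / min C⁻¹ (b - a)) * |(q : ℝ)| ^ (-(ε / 2))
          * curveMass n (Icc a b) f f' (inhomBall n p q θ (ε / 2)) := by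
  have hn1 : (1 : ℝ) ≤ n := by exact_mod_cast hn
  set Q : ℝ := |(q : ℝ)| with hQdef
  have hQpos : 0 < Q := lt_trans (by positivity) hq
  have hq0 : q ≠ 0 := by
    rintro rfl; simp only [Int.cast_zero, abs_zero, hQdef] at hQpos
    exact lt_irrefl _ hQpos
  have hQ1 : (1 : ℝ) ≤ Q := by
    rw [hQdef, ← Int.cast_abs]
    exact_mod_cast Int.one_le_abs hq0
  set i0 : Fin n := (⟨0, hn⟩ : Fin n) with hi0
  -- derivative of the first coordinate is 1 on the interior
  have hf'0 : ∀ x ∈ Ioo a b, f' x i0 = 1 := by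
    intro x hx
    have h1 : HasDerivAt (fun t => f t i0) (f' x i0) x :=
      hasDerivAt_pi.1 (hderiv x (Ioo_subset_Icc_self hx)) i0
    have heq : (fun t => f t i0) =ᶠ[nhds x] fun t => t :=
      eventually_of_mem (isOpen_Ioo.mem_nhds hx) fun t ht => by
        simpa using hf1 t (Ioo_subset_Icc_self ht)
    have h2 : HasDerivAt (fun t => f t i0) 1 x :=
      (hasDerivAt_id x).congr_of_eventuallyEq heq
    exact h1.unique h2
  have hbdd : ∀ x : ℝ, BddAbove (Set.range fun i => |f' x i|) :=
    fun x => (Set.finite_range _).bddAbove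
  have hCsup : ∀ x ∈ Icc a b, ∀ i, |f' x i| ≤ C := fun x hx i =>
    (le_ciSup (hbdd x) i).trans (hC x hx)
  have hC1 : (1 : ℝ) ≤ C := by
    have hmem : (a + b) / 2 ∈ Ioo a b := ⟨by linarith, by linarith⟩
    have := hCsup _ (Ioo_subset_Icc_self hmem) i0
    rw [hf'0 _ hmem] at this; simpa using this
  have hCpos : 0 < C := lt_of_lt_of_le one_pos hC1
  -- Lipschitz bound on coordinates
  have hlip : ∀ i, ∀ x ∈ Icc a b, ∀ y ∈ Icc a b, |f x i - f y i| ≤ C * |x - y| := by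
    intro i x hx y hy
    have := (convex_Icc a b).norm_image_sub_le_of_norm_hasDerivWithin_le
      (f := fun t => f t i) (f' := fun t => f' t i)
      (fun t ht => (hasDerivAt_pi.1 (hderiv t ht) i).hasDerivWithinAt)
      (fun t ht => by rw [Real.norm_eq_abs]; exact hCsup t ht i) hy hx
    simpa [Real.norm_eq_abs] using this
  -- the integrand
  set g : ℝ → ℝ := fun x => Real.sqrt (∑ i, f' x i ^ 2) with hgdef
  have hg_nonneg : ∀ x, 0 ≤ g x := fun x => Real.sqrt_nonneg _
  have hg_le : ∀ x ∈ Icc a b, g x ≤ n * C := by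
    intro x hx
    have hsum : ∑ i, f' x i ^ 2 ≤ (n * C) ^ 2 := by
      calc ∑ i, f' x i ^ 2 ≤ ∑ _i : Fin n, C ^ 2 := by
            refine Finset.sum_le_sum fun i _ => ?_
            have := hCsup x hx i
            nlinarith [abs_nonneg (f' x i), sq_abs (f' x i)]
        _ = n * C ^ 2 := by simp [Finset.sum_const, Finset.card_univ]
        _ ≤ (n * C) ^ 2 := by nlinarith
    calc g x ≤ Real.sqrt ((n * C) ^ 2) := Real.sqrt_le_sqrt hsum
      _ = n * C := Real.sqrt_sq (by positivity)
  have hg_ge1 : ∀ x ∈ Ioo a b, 1 ≤ g x := by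
    intro x hx
    have h1 : (1 : ℝ) ≤ ∑ i, f' x i ^ 2 := by
      have h := Finset.single_le_sum (f := fun i => f' x i ^ 2)
        (fun i _ => sq_nonneg _) (Finset.mem_univ i0)
      simpa [hf'0 x hx] using h
    calc (1 : ℝ) = Real.sqrt 1 := Real.sqrt_one.symm
      _ ≤ g x := Real.sqrt_le_sqrt h1
  -- radius
  set r : ℝ → ℝ := fun e => Q ^ (-(1 / (n : ℝ)) - e) with hrdef
  have hr_pos : ∀ e, 0 < r e := fun e => Real.rpow_pos_of_pos hQpos _
  have hr_mono : ∀ e₁ e₂ : ℝ, e₂ ≤ e₁ → r e₁ ≤ r e₂ := fun e₁ e₂ h =>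
    Real.rpow_le_rpow_of_exponent_le hQ1 (by linarith)
  have hBmem : ∀ e (y : Fin n → ℝ), y ∈ inhomBall n p q θ e ↔
      ∀ i, |(q : ℝ) * y i + (p i : ℝ) + θ i| < r e := fun e y => Iff.rfl
  -- the balls are open
  have hBopen : ∀ e, IsOpen (inhomBall n p q θ e) := by
    intro e
    have : inhomBall n p q θ e =
        ⋂ i, {y : Fin n → ℝ | |(q : ℝ) * y i + (p i : ℝ) + θ i| < r e} := by
      ext y; simp [inhomBall, Set.mem_iInter, hrdef, hQdef]
    rw [this]
    exact isOpen_iInter_of_finite fun i =>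
      isOpen_lt (((continuous_const.mul (continuous_apply i)).add
        continuous_const).add continuous_const).abs continuous_const
  have hfc : ContinuousOn f (Ioo a b) := fun x hx =>
    ((hderiv x (Ioo_subset_Icc_self hx)).continuousAt).continuousWithinAt
  -- the open version of the set of parameters
  set Jo : ℝ → Set ℝ := fun e => Ioo a b ∩ f ⁻¹' (inhomBall n p q θ e) with hJodef
  have hJo_open : ∀ e, IsOpen (Jo e) := fun e =>
    hfc.isOpen_inter_preimage isOpen_Ioo (hBopen e)
  have hJo_meas : ∀ e, MeasurableSet (Jo e) := fun e => (hJo_open e).measurableSet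
  have hJo_fin : ∀ e, volume (Jo e) < ⊤ := by
    intro e
    refine lt_of_le_of_lt (measure_mono inter_subset_left) ?_
    rw [Real.volume_Ioo]; exact ENNReal.ofReal_lt_top
  -- a.e. equality of the two sets
  have hJae : ∀ e, {x ∈ Icc a b | f x ∈ inhomBall n p q θ e} =ᵐ[volume] Jo e := by
    intro e
    rw [← MeasureTheory.measure_symmDiff_eq_zero_iff]
    refine measure_mono_null ?_ (Set.Countable.measure_zero
      (((Set.finite_singleton b).insert a).countable) volume)
    intro x hx
    rcases Set.mem_symmDiff.1 hx with ⟨⟨⟨ha, hb⟩, hfx⟩, hx3⟩ | ⟨⟨hx1, hfx⟩, hx3⟩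
    · by_contra hab'
      simp only [Set.mem_insert_iff, Set.mem_singleton_iff, not_or] at hab'
      exact hx3 ⟨⟨lt_of_le_of_ne ha (Ne.symm hab'.1), lt_of_le_of_ne hb hab'.2⟩, hfx⟩
    · exact absurd ⟨Ioo_subset_Icc_self hx1, hfx⟩ hx3
  have hcm : ∀ e, curveMass n (Icc a b) f f' (inhomBall n p q θ e)
      = ∫ x in Jo e, g x := fun e => setIntegral_congr_set (hJae e)
  -- integrability
  have hInt : ∀ e, IntegrableOn g (Jo e) := by
    intro e
    have hsm : AEStronglyMeasurable g (volume.restrict (Jo e)) := by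
      have hGmeas : Measurable fun x => Real.sqrt (∑ i, (deriv (fun t => f t i) x) ^ 2) :=
        Real.continuous_sqrt.measurable.comp
          (Finset.measurable_sum _ fun i _ => (measurable_deriv _).pow_const 2)
      refine hGmeas.aestronglyMeasurable.congr ?_
      refine ae_restrict_of_forall_mem (hJo_meas e) fun x hx => ?_
      simp only [hgdef]
      congr 1
      exact Finset.sum_congr rfl fun i _ => by
        rw [(hasDerivAt_pi.1 (hderiv x (Ioo_subset_Icc_self hx.1)) i).deriv]
    refine Integrable.mono' (g := fun _ => (n : ℝ) * C)
      (integrableOn_const (hJo_fin e).ne) hsm ?_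
    refine ae_restrict_of_forall_mem (hJo_meas e) fun x hx => ?_
    rw [Real.norm_eq_abs, abs_of_nonneg (hg_nonneg x)]
    exact hg_le x (Ioo_subset_Icc_self hx.1)
  -- upper bound for the measure of Jo e
  have hvol_up : ∀ e, (volume (Jo e)).toReal ≤ 2 * r e / Q := by
    intro e
    have hsub : Jo e ⊆ Metric.ball (-(((p i0 : ℝ) + θ i0)) / q) (r e / Q) := by
      rintro x ⟨hx1, hx2⟩
      have h := (hBmem e (f x)).1 hx2 i0
      rw [hf1 x (Ioo_subset_Icc_self hx1)] at h
      rw [Metric.mem_ball, Real.dist_eq]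
      rw [lt_div_iff₀ hQpos, ← abs_mul]
      calc |(x - -((p i0 : ℝ) + θ i0) / q) * q| = |(q : ℝ) * x + (p i0 : ℝ) + θ i0| := by
            have hqne : (q : ℝ) ≠ 0 := Int.cast_ne_zero.2 hq0
            congr 1
            field_simp
            ring
        _ < r e := h
    calc (volume (Jo e)).toReal ≤ (volume (Metric.ball (-(((p i0 : ℝ) + θ i0)) / q) (r e / Q))).toReal := by
          refine ENNReal.toReal_mono ?_ (measure_mono hsub)
          rw [Real.volume_ball]; exact ENNReal.ofReal_ne_top
      _ = 2 * (r e / Q) := by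
          rw [Real.volume_ball, ENNReal.toReal_ofReal (by positivity)]
      _ = 2 * r e / Q := by ring
  have hUp : ∀ e, ∫ x in Jo e, g x ≤ n * C * (2 * r e / Q) := by
    intro e
    calc ∫ x in Jo e, g x ≤ ∫ _x in Jo e, (n : ℝ) * C := by
          refine setIntegral_mono_on (hInt e)
            (integrableOn_const (hJo_fin e).ne) (hJo_meas e) fun x hx =>
            hg_le x (Ioo_subset_Icc_self hx.1)
      _ = (volume (Jo e)).toReal * ((n : ℝ) * C) := by
          rw [setIntegral_const]; rfl
      _ ≤ (2 * r e / Q) * ((n : ℝ) * C) := by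
          refine mul_le_mul_of_nonneg_right (hvol_up e) (by positivity)
      _ = n * C * (2 * r e / Q) := by ring
  -- numbers
  set m : ℝ := min C⁻¹ (b - a) with hmdef
  have hm_pos : 0 < m := lt_min (by positivity) (by linarith)
  have hm_leC : m ≤ C⁻¹ := min_le_left _ _
  have hm_leba : m ≤ b - a := min_le_right _ _
  have hmC : C * m ≤ 1 := by
    calc C * m ≤ C * C⁻¹ := mul_le_mul_of_nonneg_left hm_leC hCpos.le
      _ = 1 := mul_inv_cancel₀ hCpos.ne'
  set Qe : ℝ := Q ^ (-(ε / 2)) with hQedef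
  have hQe_pos : 0 < Qe := Real.rpow_pos_of_pos hQpos _
  have hμ2 : 0 ≤ ∫ x in Jo (ε / 2), g x := integral_nonneg fun x => hg_nonneg x
  rw [hcm ε, hcm (ε / 2)]
  by_cases hcase : (1 : ℝ) / 2 ≤ Qe
  · -- easy case : Q^(-ε/2) ≥ 1/2
    have hsub : Jo ε ⊆ Jo (ε / 2) := by
      rintro x ⟨hx1, hx2⟩
      exact ⟨hx1, fun i => lt_of_lt_of_le ((hBmem ε (f x)).1 hx2 i)
        (hr_mono ε (ε / 2) (by linarith))⟩
    have hmono : ∫ x in Jo ε, g x ≤ ∫ x in Jo (ε / 2), g x :=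
      setIntegral_mono_set (hInt (ε / 2))
        (Filter.Eventually.of_forall fun x => hg_nonneg x)
        (HasSubset.Subset.eventuallyLE hsub)
    have h4 : 4 ≤ 4 * (n : ℝ) * C / m := by
      rw [le_div_iff₀ hm_pos]
      have hm1 : m ≤ 1 := hm_leC.trans (by
        rw [inv_le_one_iff₀]; right; exact hC1)
      nlinarith
    have hK : 1 ≤ 4 * (n : ℝ) * C / m * Qe := by nlinarith
    calc ∫ x in Jo ε, g x ≤ ∫ x in Jo (ε / 2), g x := hmono
      _ ≤ 4 * (n : ℝ) * C / m * Qe * ∫ x in Jo (ε / 2), g x :=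
          le_mul_of_one_le_left hμ2 hK
  · -- main case : Q^(-ε/2) < 1/2
    push_neg at hcase
    obtain ⟨x₀, hx₀I, hx₀B⟩ := hhit
    set δ : ℝ := Q ^ (-1 + (-(1 / (n : ℝ)) - ε / 2)) / (2 * C) with hδdef
    have hδ_pos : 0 < δ := by
      apply div_pos (Real.rpow_pos_of_pos hQpos _) (by positivity)
    have hQδ : Q * δ * C = r (ε / 2) / 2 := by
      have h1 : Q ^ (-1 + (-(1 / (n : ℝ)) - ε / 2)) = Q⁻¹ * Q ^ (-(1 / (n : ℝ)) - ε / 2) := by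
        rw [Real.rpow_add hQpos, Real.rpow_neg_one]
      show Q * (Q ^ (-1 + (-(1 / (n : ℝ)) - ε / 2)) / (2 * C)) * C
          = Q ^ (-(1 / (n : ℝ)) - ε / 2) / 2
      rw [h1]
      field_simp
    have hrε : r ε < r (ε / 2) / 2 := by
      have h1 : r ε = r (ε / 2) * Qe := by
        show Q ^ (-(1 / (n : ℝ)) - ε) = Q ^ (-(1 / (n : ℝ)) - ε / 2) * Q ^ (-(ε / 2))
        rw [← Real.rpow_add hQpos]
        congr 1; ring
      rw [h1]
      calc r (ε / 2) * Qe < r (ε / 2) * (1 / 2) :=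
            mul_lt_mul_of_pos_left hcase (hr_pos _)
        _ = r (ε / 2) / 2 := by ring
    -- inclusion of a small interval into Jo (ε/2)
    have hincl : ∀ x ∈ Icc a b, |x - x₀| ≤ δ → f x ∈ inhomBall n p q θ (ε / 2) := by
      intro x hx hxd
      rw [hBmem]
      intro i
      have key : (q : ℝ) * f x i + (p i : ℝ) + θ i =
          ((q : ℝ) * f x₀ i + (p i : ℝ) + θ i) + (q : ℝ) * (f x i - f x₀ i) := by ring
      have h2 : |(q : ℝ) * (f x i - f x₀ i)| ≤ Q * (C * δ) := by
        rw [abs_mul, ← hQdef]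
        refine mul_le_mul_of_nonneg_left ?_ hQpos.le
        calc |f x i - f x₀ i| ≤ C * |x - x₀| := hlip i x hx x₀ hx₀I
          _ ≤ C * δ := mul_le_mul_of_nonneg_left hxd hCpos.le
      have h1 : |(q : ℝ) * f x₀ i + (p i : ℝ) + θ i| < r ε := (hBmem ε (f x₀)).1 hx₀B i
      have hQCδ : Q * (C * δ) = r (ε / 2) / 2 := by rw [← hQδ]; ring
      calc |(q : ℝ) * f x i + (p i : ℝ) + θ i|
          ≤ |(q : ℝ) * f x₀ i + (p i : ℝ) + θ i| + |(q : ℝ) * (f x i - f x₀ i)| := by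
            rw [key]; exact abs_add_le _ _
        _ < r ε + Q * (C * δ) := by linarith [h2, h1]
        _ ≤ r (ε / 2) := by rw [hQCδ]; linarith [hrε]
    -- lower volume bound
    have hlow_vol : min δ (b - a) ≤ (volume (Jo (ε / 2))).toReal := by
      have hxa : a ≤ x₀ := hx₀I.1
      have hxb : x₀ ≤ b := hx₀I.2
      set S : Set ℝ := Ioo (max (x₀ - δ) a) (min (x₀ + δ) b) with hSdef
      have hSsub : S ⊆ Jo (ε / 2) := by
        rintro x ⟨hx1, hx2⟩
        have hxa' : a < x := lt_of_le_of_lt (le_max_right _ _) hx1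
        have hxb' : x < b := lt_of_lt_of_le hx2 (min_le_right _ _)
        have hd1 : x₀ - δ < x := lt_of_le_of_lt (le_max_left _ _) hx1
        have hd2 : x < x₀ + δ := lt_of_lt_of_le hx2 (min_le_left _ _)
        refine ⟨⟨hxa', hxb'⟩, hincl x ⟨hxa'.le, hxb'.le⟩ ?_⟩
        rw [abs_le]; constructor <;> linarith
      have hlen : min δ (b - a) ≤ min (x₀ + δ) b - max (x₀ - δ) a := by
        rcases min_cases δ (b - a) with ⟨h1, h1'⟩ | ⟨h1, h1'⟩ <;>
          rcases min_cases (x₀ + δ) b with ⟨h2, h2'⟩ | ⟨h2, h2'⟩ <;>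
          rcases max_cases (x₀ - δ) a with ⟨h3, h3'⟩ | ⟨h3, h3'⟩ <;>
          rw [h1, h2, h3] <;> linarith
      calc min δ (b - a) ≤ (volume S).toReal := by
            rw [hSdef, Real.volume_Ioo, ENNReal.toReal_ofReal (by linarith [lt_min hδ_pos (by linarith : (0:ℝ) < b - a)])]
            exact hlen
        _ ≤ (volume (Jo (ε / 2))).toReal :=
            ENNReal.toReal_mono (hJo_fin (ε / 2)).ne (measure_mono hSsub)
    have hLow : min δ (b - a) ≤ ∫ x in Jo (ε / 2), g x := by
      calc min δ (b - a) ≤ (volume (Jo (ε / 2))).toReal := hlow_vol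
        _ = 1 * (volume (Jo (ε / 2))).toReal := (one_mul _).symm
        _ ≤ ∫ x in Jo (ε / 2), g x :=
            setIntegral_ge_of_const_le_real (hJo_meas _) (hJo_fin _).ne
              (fun x hx => hg_ge1 x hx.1) (hInt _)
    -- final arithmetic
    have hcoeff_pos : 0 < 4 * (n : ℝ) * C / m * Qe := by positivity
    have hmain : n * C * (2 * r ε / Q) ≤ 4 * (n : ℝ) * C / m * Qe * min δ (b - a) := by
      have hA : r ε / Q = Q ^ (-(1 / (n : ℝ)) - ε - 1) := by
        rw [show (-(1 / (n : ℝ)) - ε - 1) = (-(1 / (n : ℝ)) - ε) + (-1) by ring,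
          Real.rpow_add hQpos, Real.rpow_neg_one]
        show Q ^ (-(1 / (n : ℝ)) - ε) / Q = Q ^ (-(1 / (n : ℝ)) - ε) * Q⁻¹
        rw [div_eq_mul_inv]
      have hcomb : Q ^ (-(ε / 2)) * Q ^ (-1 + (-(1 / (n : ℝ)) - ε / 2))
          = Q ^ (-(1 / (n : ℝ)) - ε - 1) := by
        rw [← Real.rpow_add hQpos]; congr 1; ring
      have hB : Qe * δ = Q ^ (-(1 / (n : ℝ)) - ε - 1) / (2 * C) := by
        show Q ^ (-(ε / 2)) * (Q ^ (-1 + (-(1 / (n : ℝ)) - ε / 2)) / (2 * C))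
            = Q ^ (-(1 / (n : ℝ)) - ε - 1) / (2 * C)
        rw [← hcomb, mul_div_assoc]
      have hY : 0 < Q ^ (-(1 / (n : ℝ)) - ε - 1) := Real.rpow_pos_of_pos hQpos _
      set Y : ℝ := Q ^ (-(1 / (n : ℝ)) - ε - 1) with hYdef
      rcases min_cases δ (b - a) with ⟨h1, h1'⟩ | ⟨h1, h1'⟩
      · -- min = δ
        rw [h1]
        have : 4 * (n : ℝ) * C / m * Qe * δ = 4 * (n : ℝ) * C / m * (Y / (2 * C)) := by
          rw [mul_assoc, hB]
        rw [this]
        have hLHS : n * C * (2 * r ε / Q) = 2 * n * C * Y := by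
          rw [mul_div_assoc, hA]; ring
        rw [hLHS]
        rw [div_mul_eq_mul_div, le_div_iff₀ hm_pos, mul_div_assoc', le_div_iff₀ (by positivity : (0:ℝ) < 2 * C)]
        nlinarith [mul_le_mul_of_nonneg_left hmC (by positivity : (0:ℝ) ≤ 4 * (n : ℝ) * C * Y), hY, hn1, hCpos]
      · -- min = b - a
        rw [h1]
        have hexp : Y ≤ Qe := by
          rw [hYdef, hQedef]
          refine Real.rpow_le_rpow_of_exponent_le hQ1 ?_
          have h1n : 0 ≤ 1 / (n : ℝ) := by positivity
          linarith
        have hprod : Y * m ≤ Qe * (b - a) :=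
          mul_le_mul hexp hm_leba hm_pos.le hQe_pos.le
        have hLHS : n * C * (2 * r ε / Q) = 2 * n * C * Y := by
          rw [mul_div_assoc, hA]; ring
        rw [hLHS, div_mul_eq_mul_div, div_mul_eq_mul_div, le_div_iff₀ hm_pos]
        nlinarith [mul_le_mul_of_nonneg_left hprod (by positivity : (0:ℝ) ≤ 2 * (n : ℝ) * C), hY, hQe_pos, hn1, hCpos, hab, hm_pos,
          mul_pos (mul_pos (mul_pos (by linarith : (0:ℝ) < 2 * (n : ℝ)) hCpos) hQe_pos) (by linarith : (0:ℝ) < b - a)]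
    calc ∫ x in Jo ε, g x ≤ n * C * (2 * r ε / Q) := hUp ε
      _ ≤ 4 * (n : ℝ) * C / m * Qe * min δ (b - a) := hmain
      _ ≤ 4 * (n : ℝ) * C / m * Qe * ∫ x in Jo (ε / 2), g x :=
          mul_le_mul_of_nonneg_left hLow hcoeff_pos.le
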